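/- Let 1 ≤ q < p < ∞, let ω be a weight on the upper half-plane 𝓗 belonging to the Békollé–Bonami class B_p, and let μ be a positive Borel measure on 𝓗 such that the function K_μ(z) = sup {μ(Q_I)/ω(Q_I) : I ⊂ ℝ a bounded interval with z ∈ Q_I} belongs to L^s_ω(𝓗), where s = p/(p−q). Then there is a constant C > 0 such that for every f ∈ L^p_ω(𝓗), (∫_𝓗 (M_{d,ω} f(z))^q dμ(z))^{1/q} ≤ C ‖f‖_{p,ω}. -/

import Mathlib

open MeasureTheory Set
open scoped ENNReal NNReal

noncomputable section

/-- The upper half-plane `𝓗`. -/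
def UHP : Set ℂ := {z : ℂ | 0 < z.im}

/-- The Carleson box `Q_I` over the bounded interval `I = [a, b)`. -/
def Box (a b : ℝ) : Set ℂ := {z : ℂ | z.re ∈ Set.Ico a b ∧ z.im ∈ Set.Ioo 0 (b - a)}

/-- The `ω`-mass of a set, `ω(S) = ∫_S ω dV`. -/
def wMass (ω : ℂ → ℝ≥0∞) (S : Set ℂ) : ℝ≥0∞ := ∫⁻ z in S, ω z

/-- The Carleson box over the standard dyadic interval `[m·2^j, (m+1)·2^j)`. -/
def dBox (j m : ℤ) : Set ℂ := Box ((2 : ℝ) ^ j * (m : ℝ)) ((2 : ℝ) ^ j * ((m : ℝ) + 1))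

/-- The dyadic weighted maximal function `M_{d,ω} f` (standard dyadic grid). -/
def maxDW (ω : ℂ → ℝ≥0∞) (f : ℂ → ℂ) (z : ℂ) : ℝ≥0∞ :=
  ⨆ (j : ℤ) (m : ℤ) (_ : z ∈ dBox j m),
    (wMass ω (dBox j m))⁻¹ * ∫⁻ w in dBox j m, (‖f w‖₊ : ℝ≥0∞) * ω w

/-- The Békollé–Bonami constant `[ω]_{B_p}`. -/
def BBconst (ω : ℂ → ℝ≥0∞) (p : ℝ) : ℝ≥0∞ :=
  ⨆ (a : ℝ) (b : ℝ) (_ : a < b),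
    ((volume (Box a b))⁻¹ * wMass ω (Box a b)) *
      ((volume (Box a b))⁻¹ * ∫⁻ z in Box a b, ω z ^ (1 - p / (p - 1))) ^ (p - 1)

/-- `K_μ(z) = sup { μ(Q_I)/ω(Q_I) : I ⊂ ℝ a bounded interval with z ∈ Q_I }`. -/
def Kmu (ω : ℂ → ℝ≥0∞) (μ : Measure ℂ) (z : ℂ) : ℝ≥0∞ :=
  ⨆ (a : ℝ) (b : ℝ) (_ : a < b) (_ : z ∈ Box a b), μ (Box a b) / wMass ω (Box a b)

lemma two_zpow_pos (j : ℤ) : (0:ℝ) < 2 ^ j := zpow_pos two_pos j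

lemma mem_dBox {z : ℂ} {j m : ℤ} :
    z ∈ dBox j m ↔ ⌊z.re / 2 ^ j⌋ = m ∧ z.im ∈ Set.Ioo 0 ((2:ℝ) ^ j) := by
  have h2 := two_zpow_pos j
  constructor
  · rintro ⟨⟨h1, h2'⟩, h3⟩
    refine ⟨?_, ?_⟩
    · rw [Int.floor_eq_iff]
      constructor
      · rw [le_div_iff₀ h2]; linarith [h1]
      · rw [div_lt_iff₀ h2]; linarith [h2']
    · convert h3 using 2; ring
  · rintro ⟨h1, h3⟩
    have h1' := Int.floor_eq_iff.mp h1
    rw [le_div_iff₀ h2, div_lt_iff₀ h2] at h1'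
    refine ⟨⟨by linarith [h1'.1], by linarith [h1'.2]⟩, ?_⟩
    convert h3 using 2; ring

lemma measurableSet_Box (a b : ℝ) : MeasurableSet (Box a b) := by
  have : Box a b = Complex.re ⁻¹' (Set.Ico a b) ∩ Complex.im ⁻¹' (Set.Ioo 0 (b - a)) := by
    ext z; simp [Box, Set.mem_preimage]
  rw [this]
  exact (measurableSet_Ico.preimage Complex.measurable_re).inter
    (measurableSet_Ioo.preimage Complex.measurable_im)

lemma measurableSet_dBox (j m : ℤ) : MeasurableSet (dBox j m) := measurableSet_Box _ _

lemma dBox_subset_UHP (j m : ℤ) : dBox j m ⊆ UHP := fun z hz => (mem_dBox.mp hz).2.1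

/-- auxiliary floor lemma: `⌊x/(c*n)⌋ = ⌊⌊x/c⌋/n⌋`. -/
lemma floor_div_mul (x c : ℝ) (hc : 0 < c) (n : ℕ) (hn : 0 < n) :
    ⌊x / (c * n)⌋ = ⌊(⌊x / c⌋ : ℝ) / (n : ℝ)⌋ := by
  have hn' : (0:ℝ) < n := by exact_mod_cast hn
  set m : ℤ := ⌊x / c⌋
  set M : ℤ := ⌊(m:ℝ) / (n:ℝ)⌋
  have hm1 : (m:ℝ) * c ≤ x := by
    rw [← le_div_iff₀ hc]; exact Int.floor_le _
  have hm2 : x < ((m:ℝ) + 1) * c := by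
    rw [← div_lt_iff₀ hc]; exact Int.lt_floor_add_one _
  have hM1 : (M:ℝ) ≤ (m:ℝ) / n := Int.floor_le _
  have hM2 : (m:ℝ) / n < M + 1 := Int.lt_floor_add_one _
  -- integer consequences
  have hMn_le_m : (M:ℝ) * n ≤ m := by
    rw [← le_div_iff₀ hn']; exact hM1
  have hm_lt : (m:ℝ) < (M + 1) * n := by
    rw [← div_lt_iff₀ hn']; exact hM2
  have hmlt' : (m:ℤ) + 1 ≤ (M + 1) * n := by exact_mod_cast Int.lt_iff_add_one_le.mp (by exact_mod_cast hm_lt)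
  rw [Int.floor_eq_iff]
  constructor
  · rw [le_div_iff₀ (by positivity)]
    calc (M:ℝ) * (c * n) = ((M:ℝ) * n) * c := by ring
    _ ≤ (m:ℝ) * c := by nlinarith
    _ ≤ x := by nlinarith
  · rw [div_lt_iff₀ (by positivity)]
    have h2 : ((m:ℝ) + 1) * c ≤ ((M:ℝ) + 1) * n * c := by
      have : ((m:ℝ) + 1) ≤ ((M:ℝ) + 1) * n := by exact_mod_cast hmlt'
      nlinarith
    nlinarith [hm2]

/-- dyadic nesting -/
lemma dBox_nested {j j' m m' : ℤ} (hjj : j ≤ j') {z : ℂ}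
    (hz : z ∈ dBox j m) (hz' : z ∈ dBox j' m') : dBox j m ⊆ dBox j' m' := by
  obtain ⟨hz1, hz2⟩ := mem_dBox.mp hz
  obtain ⟨hz1', hz2'⟩ := mem_dBox.mp hz'
  intro w hw
  obtain ⟨hw1, hw2⟩ := mem_dBox.mp hw
  set k : ℕ := (j' - j).toNat
  have hk : (k : ℤ) = j' - j := Int.toNat_of_nonneg (by omega)
  have hkpos : 0 < 2 ^ k := Nat.pow_pos (by norm_num) -- may need different name
  have hsplit : (2:ℝ) ^ j' = 2 ^ j * ((2 ^ k : ℕ) : ℝ) := by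
    push_cast
    rw [← zpow_natCast (2:ℝ) k, ← zpow_add₀ (two_ne_zero)]
    congr 1; omega
  have key : ∀ x : ℝ, ⌊x / 2 ^ j⌋ = m → ⌊x / 2 ^ j'⌋ = ⌊(m:ℝ) / ((2^k : ℕ) : ℝ)⌋ := by
    intro x hx
    rw [hsplit, floor_div_mul x _ (two_zpow_pos j) _ hkpos, hx]
  rw [mem_dBox]
  constructor
  · rw [key w.re hw1, ← key z.re hz1, hz1']
  · exact ⟨hw2.1, lt_of_lt_of_le hw2.2 (zpow_le_zpow_right₀ one_le_two hjj)⟩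

/-- a canonical point in each dyadic box -/
lemma pt_mem_dBox (j m : ℤ) : (⟨2^j * m, (3/4) * 2^j⟩ : ℂ) ∈ dBox j m := by
  have h2 := two_zpow_pos j
  rw [mem_dBox]
  constructor
  · have : (2:ℝ)^j * m / 2^j = m := by field_simp
    rw [show (⟨2^j * m, (3/4) * 2^j⟩ : ℂ).re = 2^j * m from rfl, this, Int.floor_intCast]
  · constructor <;> [positivity; nlinarith]

lemma scale_le_of_subset {j j' m m' : ℤ} (h : dBox j m ⊆ dBox j' m') : j ≤ j' := by
  by_contra hc
  push_neg at hc
  have hz := h (pt_mem_dBox j m)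
  have him := (mem_dBox.mp hz).2.2
  have : (3/4 : ℝ) * 2^j < 2^j' := him
  have h1 : (2:ℝ)^j' ≤ 2^(j-1) := zpow_le_zpow_right₀ one_le_two (by omega)
  have h2 : (2:ℝ)^(j-1) = 2^j / 2 := by
    rw [zpow_sub₀ (two_ne_zero)]; norm_num
  nlinarith [two_zpow_pos j]

lemma eq_of_mem_same_scale {j m m' : ℤ} {z : ℂ} (h : z ∈ dBox j m) (h' : z ∈ dBox j m') :
    m = m' := by
  rw [mem_dBox] at h h'
  omega

/-- average of `g` over the dyadic box w.r.t. measure `ν` -/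
def avg (ν : Measure ℂ) (g : ℂ → ℝ≥0∞) (j m : ℤ) : ℝ≥0∞ :=
  (ν (dBox j m))⁻¹ * ∫⁻ w in dBox j m, g w ∂ν

/-- dyadic maximal function w.r.t. measure `ν` -/
def mD (ν : Measure ℂ) (g : ℂ → ℝ≥0∞) (z : ℂ) : ℝ≥0∞ :=
  ⨆ (j : ℤ) (m : ℤ) (_ : z ∈ dBox j m), avg ν g j m

lemma iSup_dbox_measurable (c : ℤ → ℤ → ℝ≥0∞) :
    Measurable (fun z : ℂ => ⨆ (j : ℤ) (m : ℤ) (_ : z ∈ dBox j m), c j m) := by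
  apply Measurable.iSup; intro j
  apply Measurable.iSup; intro m
  have : (fun z : ℂ => ⨆ (_ : z ∈ dBox j m), c j m)
      = (dBox j m).indicator (fun _ => c j m) := by
    funext z
    by_cases hz : z ∈ dBox j m
    · simp [hz]
    · simp [hz]
  rw [this]
  exact measurable_const.indicator (measurableSet_dBox j m)

lemma mD_measurable (ν : Measure ℂ) (g : ℂ → ℝ≥0∞) : Measurable (mD ν g) :=
  iSup_dbox_measurable _

lemma avg_le_mD {ν : Measure ℂ} {g : ℂ → ℝ≥0∞} {j m : ℤ} {z : ℂ} (hz : z ∈ dBox j m) :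
    avg ν g j m ≤ mD ν g z :=
  le_iSup_of_le j (le_iSup_of_le m (le_iSup_of_le hz le_rfl))

lemma mD_zero_of_not_UHP {ν : Measure ℂ} {g : ℂ → ℝ≥0∞} {z : ℂ} (hz : z ∉ UHP) :
    mD ν g z = 0 := by
  rw [mD]
  simp only [ENNReal.iSup_eq_zero]
  intro j m hmem
  exact absurd (dBox_subset_UHP j m hmem) hz

/-- avg is 0 unless `0 < ν Q < ∞` -/
lemma avg_eq_zero_of_zero {ν : Measure ℂ} {g : ℂ → ℝ≥0∞} {j m : ℤ} (h : ν (dBox j m) = 0) :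
    avg ν g j m = 0 := by
  rw [avg]
  have : ∫⁻ w in dBox j m, g w ∂ν = 0 := by
    rw [Measure.restrict_eq_zero.mpr h]; simp
  simp [this]

lemma avg_eq_zero_of_top {ν : Measure ℂ} {g : ℂ → ℝ≥0∞} {j m : ℤ} (h : ν (dBox j m) = ∞) :
    avg ν g j m = 0 := by
  rw [avg, h, ENNReal.inv_top, zero_mul]

lemma finpos_of_lt_avg {ν : Measure ℂ} {g : ℂ → ℝ≥0∞} {j m : ℤ} {lam : ℝ≥0∞}
    (h : lam < avg ν g j m) :
    ν (dBox j m) ≠ 0 ∧ ν (dBox j m) ≠ ∞ := by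
  constructor
  · intro h0; rw [avg_eq_zero_of_zero h0] at h; exact absurd h (by simp)
  · intro h0; rw [avg_eq_zero_of_top h0] at h; exact absurd h (by simp)

section Covering

variable {ν ρ κ : Measure ℂ} {g : ℂ → ℝ≥0∞}

/-- The covering / distribution-function comparison lemma. -/
lemma dist_compare (ν : Measure ℂ) (g : ℂ → ℝ≥0∞) (ρ κ : Measure ℂ) (lam : ℝ≥0∞)
    (hQ : ∀ j m : ℤ, lam < avg ν g j m → ρ (dBox j m) ≤ κ (dBox j m)) :
    ρ {z | lam < mD ν g z} ≤ κ {z | lam < mD ν g z} := by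
  classical
  -- family of "stopped" boxes at generation cutoff N
  set S : ℕ → Set (ℤ × ℤ) := fun N => {pr | pr.1 ≤ (N : ℤ) ∧ lam < avg ν g pr.1 pr.2} with hS
  set Mx : ℕ → Set (ℤ × ℤ) := fun N =>
    {pr ∈ S N | ∀ pr' ∈ S N, dBox pr.1 pr.2 ⊆ dBox pr'.1 pr'.2 → pr = pr'} with hMx
  set E : ℕ → Set ℂ := fun N => ⋃ pr ∈ S N, dBox pr.1 pr.2 with hE
  -- E N is also the union of the maximal boxes
  have hEMx : ∀ N, E N = ⋃ pr ∈ Mx N, dBox pr.1 pr.2 := by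
    intro N
    apply Set.Subset.antisymm
    · rintro z hz
      rw [hE, Set.mem_iUnion₂] at hz
      obtain ⟨⟨j₀, m₀⟩, hpr, hzmem⟩ := hz
      -- maximal scale of a box in S N containing z
      have hbdd : ∃ b : ℤ, ∀ j, (∃ m, (j, m) ∈ S N ∧ z ∈ dBox j m) → j ≤ b :=
        ⟨(N : ℤ), fun j ⟨m, hm, _⟩ => hm.1⟩
      have hinh : ∃ j, ∃ m, (j, m) ∈ S N ∧ z ∈ dBox j m := ⟨j₀, m₀, hpr, hzmem⟩
      obtain ⟨j₁, ⟨m₁, hm₁S, hzm₁⟩, hmax⟩ := Int.exists_greatest_of_bdd hbdd hinh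
      rw [Set.mem_iUnion₂]
      refine ⟨(j₁, m₁), ⟨hm₁S, ?_⟩, hzm₁⟩
      rintro ⟨j', m'⟩ hpr' hsub
      have hzm' : z ∈ dBox j' m' := hsub hzm₁
      have hj'le : j' ≤ j₁ := hmax j' ⟨m', hpr', hzm'⟩
      have hj₁le : j₁ ≤ j' := scale_le_of_subset hsub
      have : j₁ = j' := le_antisymm hj₁le hj'le
      subst this
      exact Prod.ext rfl (eq_of_mem_same_scale hzm₁ hzm')
    · apply Set.iUnion₂_mono'
      intro pr hpr
      exact ⟨pr, hpr.1, subset_rfl⟩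
  -- maximal boxes are pairwise disjoint
  have hdisj : ∀ N, (Mx N).PairwiseDisjoint (fun pr : ℤ × ℤ => dBox pr.1 pr.2) := by
    intro N
    have key : ∀ pr ∈ Mx N, ∀ pr' ∈ Mx N, pr.1 ≤ pr'.1 →
        ¬ Disjoint (dBox pr.1 pr.2) (dBox pr'.1 pr'.2) → pr = pr' := by
      rintro ⟨j, m⟩ hpr ⟨j', m'⟩ hpr' hle hnd
      rw [Set.not_disjoint_iff] at hnd
      obtain ⟨z, hz, hz'⟩ := hnd
      exact hpr.2 (j', m') hpr'.1 (dBox_nested hle hz hz')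
    intro pr hpr pr' hpr' hne
    by_contra hnd
    rcases le_total pr.1 pr'.1 with h | h
    · exact hne (key pr hpr pr' hpr' h hnd)
    · exact hne ((key pr' hpr' pr hpr h (fun hd => hnd hd.symm)).symm)
  -- E N is inside the superlevel set
  have hEsub : ∀ N, E N ⊆ {z | lam < mD ν g z} := by
    intro N z hz
    rw [hE, Set.mem_iUnion₂] at hz
    obtain ⟨pr, hpr, hzmem⟩ := hz
    exact lt_of_lt_of_le hpr.2 (avg_le_mD hzmem)
  -- measure estimate on each E N
  have hmeas : ∀ N, ρ (E N) ≤ κ {z | lam < mD ν g z} := by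
    intro N
    calc ρ (E N) ≤ ∑' pr : Mx N, ρ (dBox pr.1.1 pr.1.2) := by
          rw [hEMx N]
          exact measure_biUnion_le ρ ((Set.to_countable _)) _
    _ ≤ ∑' pr : Mx N, κ (dBox pr.1.1 pr.1.2) := by
          apply ENNReal.tsum_le_tsum
          rintro ⟨pr, hpr⟩
          exact hQ pr.1 pr.2 hpr.1.2
    _ = κ (⋃ pr ∈ Mx N, dBox pr.1 pr.2) := by
          rw [measure_biUnion (Set.to_countable _) (hdisj N)
            (fun pr _ => measurableSet_dBox pr.1 pr.2)]
    _ ≤ κ {z | lam < mD ν g z} := by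
          apply measure_mono
          rw [← hEMx N]
          exact hEsub N
  -- the superlevel set is the increasing union of the E N
  have hcover : {z | lam < mD ν g z} = ⋃ N : ℕ, E N := by
    apply Set.Subset.antisymm
    · intro z hz
      have : lam < mD ν g z := hz
      rw [mD, lt_iSup_iff] at this
      obtain ⟨j, hj⟩ := this
      rw [lt_iSup_iff] at hj
      obtain ⟨m, hm⟩ := hj
      rw [lt_iSup_iff] at hm
      obtain ⟨hmem, hlt⟩ := hm
      rw [Set.mem_iUnion]
      refine ⟨j.toNat, ?_⟩
      rw [hE, Set.mem_iUnion₂]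
      exact ⟨(j, m), ⟨Int.self_le_toNat j, hlt⟩, hmem⟩
    · exact Set.iUnion_subset hEsub
  have hmono : Monotone E := by
    intro N N' hNN'
    apply Set.iUnion₂_mono'
    intro pr hpr
    exact ⟨pr, ⟨le_trans hpr.1 (by exact_mod_cast hNN'), hpr.2⟩, subset_rfl⟩
  calc ρ {z | lam < mD ν g z} = ρ (⋃ N : ℕ, E N) := by rw [hcover]
  _ = ⨆ N : ℕ, ρ (E N) := hmono.directed_le.measure_iUnion
  _ ≤ κ {z | lam < mD ν g z} := iSup_le hmeas

end Covering

section Layercake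

/-- divergence of `∫_0^∞ t^(r-1) dt` -/
lemma lintegral_rpow_Ioi_top {r : ℝ} (hr : 0 < r) :
    ∫⁻ t in Ioi (0:ℝ), ENNReal.ofReal (t ^ (r - 1)) = ∞ := by
  by_contra hfin
  have h1 : ∫⁻ t in Ioi (1:ℝ), ENNReal.ofReal (t ^ (r - 1)) ≠ ∞ := by
    intro htop
    apply hfin
    rw [eq_top_iff, ← htop]
    exact lintegral_mono_set (Set.Ioi_subset_Ioi zero_le_one)
  have hint : IntegrableOn (fun t : ℝ => t ^ (r - 1)) (Ioi (1:ℝ)) := by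
    rw [IntegrableOn, ← lintegral_ofReal_ne_top_iff_integrable]
    · exact h1
    · exact (measurable_id.pow measurable_const).aestronglyMeasurable
    · filter_upwards [ae_restrict_mem measurableSet_Ioi] with t ht
      exact Real.rpow_nonneg (zero_le_one.trans ht.le) _
  rw [integrableOn_Ioi_rpow_iff zero_lt_one] at hint
  linarith

/-- Layer cake formula for `ℝ≥0∞`-valued functions, arbitrary measure. -/
lemma layercake_ennreal (ρ : Measure ℂ) {h : ℂ → ℝ≥0∞} (hh : Measurable h) {r : ℝ}
    (hr : 0 < r) :
    ∫⁻ z, h z ^ r ∂ρ =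
      ENNReal.ofReal r *
        ∫⁻ t in Ioi (0:ℝ), ρ {z | ENNReal.ofReal t < h z} * ENNReal.ofReal (t ^ (r - 1)) := by
  by_cases hnull : ρ {z | h z = ∞} = 0
  · -- finite a.e. case: reduce to the real-valued layer cake formula
    have hae : ∀ᵐ z ∂ρ, h z ≠ ∞ := by
      rw [ae_iff]; simpa using hnull
    have f_mble : AEMeasurable (fun z => (h z).toReal) ρ := hh.ennreal_toReal.aemeasurable
    have key := lintegral_rpow_eq_lintegral_meas_lt_mul ρ
      (f := fun z => (h z).toReal) (Filter.Eventually.of_forall fun _ => ENNReal.toReal_nonneg)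
      f_mble hr
    have hL : ∫⁻ z, h z ^ r ∂ρ = ∫⁻ z, ENNReal.ofReal ((h z).toReal ^ r) ∂ρ := by
      apply lintegral_congr_ae
      filter_upwards [hae] with z hz
      rw [← ENNReal.ofReal_rpow_of_nonneg ENNReal.toReal_nonneg hr.le, ENNReal.ofReal_toReal hz]
    have hR : ∫⁻ t in Ioi (0:ℝ), ρ {z | t < (h z).toReal} * ENNReal.ofReal (t ^ (r - 1))
        = ∫⁻ t in Ioi (0:ℝ), ρ {z | ENNReal.ofReal t < h z} * ENNReal.ofReal (t ^ (r - 1)) := by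
      apply setLIntegral_congr_fun measurableSet_Ioi
      intro t ht
      beta_reduce
      congr 1
      apply measure_congr
      rw [Filter.eventuallyEq_set]
      filter_upwards [hae] with z hz
      show t < (h z).toReal ↔ ENNReal.ofReal t < h z
      exact (ENNReal.ofReal_lt_iff_lt_toReal (le_of_lt ht) hz).symm
    rw [hL, key, hR]
  · -- the function is infinite on a set of positive measure: both sides are `∞`
    have hS : MeasurableSet {z | h z = ∞} := hh (measurableSet_singleton _)
    have hLHS : ∫⁻ z, h z ^ r ∂ρ = ∞ := by
      rw [eq_top_iff]
      calc (⊤:ℝ≥0∞) = ∫⁻ _ in {z | h z = ∞}, (⊤:ℝ≥0∞) ∂ρ := by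
            rw [setLIntegral_const, ENNReal.top_mul hnull]
      _ = ∫⁻ z in {z | h z = ∞}, h z ^ r ∂ρ := by
            apply setLIntegral_congr_fun hS
            intro z hz
            beta_reduce
            rw [Set.mem_setOf_eq] at hz
            rw [hz, ENNReal.top_rpow_of_pos hr]
      _ ≤ ∫⁻ z, h z ^ r ∂ρ := setLIntegral_le_lintegral _ _
    have hRHS : ∫⁻ t in Ioi (0:ℝ), ρ {z | ENNReal.ofReal t < h z} * ENNReal.ofReal (t ^ (r - 1))
        = ∞ := by
      rw [eq_top_iff]
      calc (⊤:ℝ≥0∞) = ρ {z | h z = ∞} * ∫⁻ t in Ioi (0:ℝ), ENNReal.ofReal (t ^ (r - 1)) := by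
            rw [lintegral_rpow_Ioi_top hr, ENNReal.mul_top hnull]
      _ = ∫⁻ t in Ioi (0:ℝ), ρ {z | h z = ∞} * ENNReal.ofReal (t ^ (r - 1)) := by
            have mble : Measurable fun t : ℝ => ENNReal.ofReal (t ^ (r - 1)) :=
              (measurable_id.pow measurable_const).ennreal_ofReal
            rw [lintegral_const_mul _ mble]
      _ ≤ _ := by
            apply lintegral_mono
            intro t
            apply mul_le_mul_left
            apply measure_mono
            intro z hz
            rw [Set.mem_setOf_eq] at hz ⊢
            rw [hz]
            exact ENNReal.ofReal_lt_top
    rw [hLHS, hRHS, ENNReal.mul_top (ENNReal.ofReal_pos.mpr hr).ne']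

end Layercake

section Doob

lemma ennreal_inv_mul_le (a c : ℝ≥0∞) : a⁻¹ * (c * a) ≤ c := by
  rcases eq_or_ne a 0 with rfl | h0
  · simp
  rcases eq_or_ne a ∞ with rfl | htop
  · simp
  have : a⁻¹ * (c * a) = c := by
    rw [mul_comm c a, ← mul_assoc, ENNReal.inv_mul_cancel h0 htop, one_mul]
  exact this.le

lemma ennreal_rpow_sub_one_mul (x : ℝ≥0∞) {p : ℝ} (hp : 1 < p) : x ^ (p - 1) * x = x ^ p := by
  rcases eq_or_ne x 0 with rfl | h0
  · rw [ENNReal.zero_rpow_of_pos (by linarith), ENNReal.zero_rpow_of_pos (by linarith), mul_zero]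
  rcases eq_or_ne x ∞ with rfl | htop
  · rw [ENNReal.top_rpow_of_pos (by linarith), ENNReal.top_rpow_of_pos (by linarith),
      ENNReal.top_mul_top]
  · nth_rewrite 2 [← ENNReal.rpow_one x]
    rw [← ENNReal.rpow_add _ _ h0 htop]
    norm_num

/-- weak (1,1) inequality for the dyadic maximal operator -/
lemma weak_one_one (ν : Measure ℂ) {g : ℂ → ℝ≥0∞} (hg : Measurable g) {lam : ℝ≥0∞}
    (h0 : lam ≠ 0) (htop : lam ≠ ∞) :
    ν {z | lam < mD ν g z} ≤ lam⁻¹ * ∫⁻ z, g z ∂ν := by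
  have key := dist_compare ν g ν (ν.withDensity (fun z => lam⁻¹ * g z)) lam ?_
  · refine le_trans key (le_trans (measure_mono (Set.subset_univ _)) ?_)
    rw [withDensity_apply _ MeasurableSet.univ, Measure.restrict_univ,
      lintegral_const_mul _ hg]
  · intro j m hlt
    obtain ⟨hne0, hnetop⟩ := finpos_of_lt_avg hlt
    rw [withDensity_apply _ (measurableSet_dBox j m), lintegral_const_mul _ hg]
    have h1 : lam * ν (dBox j m) ≤ ∫⁻ w in dBox j m, g w ∂ν := by
      calc lam * ν (dBox j m) ≤ avg ν g j m * ν (dBox j m) := mul_le_mul_left hlt.le _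
      _ = (∫⁻ w in dBox j m, g w ∂ν) * ((ν (dBox j m))⁻¹ * ν (dBox j m)) := by rw [avg]; ring
      _ = _ := by rw [ENNReal.inv_mul_cancel hne0 hnetop, mul_one]
    calc ν (dBox j m) = lam⁻¹ * (lam * ν (dBox j m)) := by
          rw [← mul_assoc, ENNReal.inv_mul_cancel h0 htop, one_mul]
    _ ≤ _ := mul_le_mul_right h1 _

/-- Doob's maximal inequality in `L^p` for the dyadic maximal operator. -/
lemma doob (ν : Measure ℂ) {g : ℂ → ℝ≥0∞} (hg : Measurable g) {p : ℝ} (hp : 1 < p) :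
    ∫⁻ z, (mD ν g z) ^ p ∂ν ≤
      (ENNReal.ofReal p * ENNReal.ofReal (2 / (p - 1)) * (2:ℝ≥0∞) ^ (p - 1)) *
        ∫⁻ z, g z ^ p ∂ν := by
  have hppos : (0:ℝ) < p := by linarith
  have hp1 : (0:ℝ) < p - 1 := by linarith
  set νg := ν.withDensity g with hνg
  have h2g : Measurable fun z => 2 * g z := measurable_const.mul hg
  -- the splitting estimate
  have split : ∀ t : ℝ, 0 < t →
      ν {z | ENNReal.ofReal t < mD ν g z} ≤
        (ENNReal.ofReal (t/2))⁻¹ * νg {z | ENNReal.ofReal t < 2 * g z} := by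
    intro t ht
    set S := {w : ℂ | ENNReal.ofReal t < 2 * g w} with hSdef
    have hSmeas : MeasurableSet S := h2g measurableSet_Ioi
    set h : ℂ → ℝ≥0∞ := S.indicator g with hh
    have hhmeas : Measurable h := hg.indicator hSmeas
    have hpt : ∀ w, g w ≤ h w + ENNReal.ofReal (t/2) := by
      intro w
      by_cases hw : w ∈ S
      · rw [hh, Set.indicator_of_mem hw]
        exact le_self_add
      · have h2 : 2 * g w ≤ ENNReal.ofReal t := not_lt.mp hw
        have hgw : g w ≤ ENNReal.ofReal (t/2) := by
          rw [ENNReal.ofReal_div_of_pos two_pos, ENNReal.le_div_iff_mul_le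
            (Or.inl (by simp)) (Or.inl (by simp))]
          calc g w * ENNReal.ofReal 2 = 2 * g w := by
                rw [ENNReal.ofReal_ofNat, mul_comm]
          _ ≤ _ := h2
        rw [hh, Set.indicator_of_notMem hw, zero_add]
        exact hgw
    have havg : ∀ j m : ℤ, avg ν g j m ≤ avg ν h j m + ENNReal.ofReal (t/2) := by
      intro j m
      rw [avg, avg]
      calc (ν (dBox j m))⁻¹ * ∫⁻ w in dBox j m, g w ∂ν
          ≤ (ν (dBox j m))⁻¹ * ∫⁻ w in dBox j m, (h w + ENNReal.ofReal (t/2)) ∂ν :=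
            mul_le_mul_right (lintegral_mono (fun w => hpt w)) _
      _ = (ν (dBox j m))⁻¹ * ((∫⁻ w in dBox j m, h w ∂ν) + ENNReal.ofReal (t/2) * ν (dBox j m)) := by
            rw [lintegral_add_right _ measurable_const, setLIntegral_const]
      _ = (ν (dBox j m))⁻¹ * (∫⁻ w in dBox j m, h w ∂ν)
            + (ν (dBox j m))⁻¹ * (ENNReal.ofReal (t/2) * ν (dBox j m)) := by rw [mul_add]
      _ ≤ _ := add_le_add le_rfl (ennreal_inv_mul_le _ _)
    have hsub : {z | ENNReal.ofReal t < mD ν g z} ⊆ {z | ENNReal.ofReal (t/2) < mD ν h z} := by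
      intro z hz
      simp only [Set.mem_setOf_eq] at hz ⊢
      rw [mD, lt_iSup_iff] at hz
      obtain ⟨j, hz⟩ := hz
      rw [lt_iSup_iff] at hz
      obtain ⟨m, hz⟩ := hz
      rw [lt_iSup_iff] at hz
      obtain ⟨hmem, hlt⟩ := hz
      have hlt2 : ENNReal.ofReal (t/2) < avg ν h j m := by
        by_contra hcon
        push_neg at hcon
        have hle : avg ν g j m ≤ ENNReal.ofReal (t/2) + ENNReal.ofReal (t/2) :=
          le_trans (havg j m) (add_le_add_left hcon _)
        rw [← ENNReal.ofReal_add (by linarith) (by linarith)] at hle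
        have ht2 : t/2 + t/2 = t := by ring
        rw [ht2] at hle
        exact lt_irrefl _ (lt_of_lt_of_le hlt hle)
      exact lt_of_lt_of_le hlt2 (avg_le_mD hmem)
    calc ν {z | ENNReal.ofReal t < mD ν g z}
        ≤ ν {z | ENNReal.ofReal (t/2) < mD ν h z} := measure_mono hsub
    _ ≤ (ENNReal.ofReal (t/2))⁻¹ * ∫⁻ w, h w ∂ν :=
        weak_one_one ν hhmeas (ENNReal.ofReal_pos.mpr (by linarith)).ne' ENNReal.ofReal_ne_top
    _ = (ENNReal.ofReal (t/2))⁻¹ * νg S := by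
        rw [hνg, withDensity_apply _ hSmeas, hh, lintegral_indicator hSmeas]
  -- layer cake assembly
  have L1 := layercake_ennreal ν (mD_measurable ν g) hppos
  have L2 := layercake_ennreal νg (h := fun z => 2 * g z) h2g hp1
  rw [L1]
  have key : (∫⁻ t in Ioi (0:ℝ), ν {z | ENNReal.ofReal t < mD ν g z} * ENNReal.ofReal (t^(p-1)))
      ≤ ENNReal.ofReal (2/(p-1)) * (ENNReal.ofReal (p-1) *
          ∫⁻ t in Ioi (0:ℝ), νg {z | ENNReal.ofReal t < 2 * g z} * ENNReal.ofReal (t^(p-1-1))) := by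
    rw [← lintegral_const_mul' _ _ ENNReal.ofReal_ne_top,
        ← lintegral_const_mul' _ _ ENNReal.ofReal_ne_top]
    apply lintegral_mono_ae
    filter_upwards [ae_restrict_mem measurableSet_Ioi] with t ht
    rw [Set.mem_Ioi] at ht
    have h1 := split t ht
    have hreal : (t/2)⁻¹ * t^(p-1) = 2/(p-1) * ((p-1) * t^(p-1-1)) := by
      have htp : t^(p-1-1) = t^(p-1) * t⁻¹ := by
        rw [Real.rpow_sub ht, Real.rpow_one, div_eq_mul_inv]
      rw [htp, ← mul_assoc, div_mul_cancel₀ _ (by linarith : p - 1 ≠ 0), inv_div]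
      field_simp
    calc ν {z | ENNReal.ofReal t < mD ν g z} * ENNReal.ofReal (t^(p-1))
        ≤ ((ENNReal.ofReal (t/2))⁻¹ * νg {z | ENNReal.ofReal t < 2 * g z})
            * ENNReal.ofReal (t^(p-1)) := mul_le_mul_left h1 _
    _ = ((ENNReal.ofReal (t/2))⁻¹ * ENNReal.ofReal (t^(p-1)))
            * νg {z | ENNReal.ofReal t < 2 * g z} := by ring
    _ = ENNReal.ofReal (2/(p-1) * ((p-1) * t^(p-1-1)))
            * νg {z | ENNReal.ofReal t < 2 * g z} := by
        rw [← ENNReal.ofReal_inv_of_pos (by linarith : (0:ℝ) < t/2),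
          ← ENNReal.ofReal_mul (by positivity), hreal]
    _ = ENNReal.ofReal (2/(p-1)) * (ENNReal.ofReal (p-1)
            * (νg {z | ENNReal.ofReal t < 2 * g z} * ENNReal.ofReal (t^(p-1-1)))) := by
        rw [ENNReal.ofReal_mul (by positivity), ENNReal.ofReal_mul (by linarith)]
        ring
  have L2' : ENNReal.ofReal (p-1) *
      ∫⁻ t in Ioi (0:ℝ), νg {z | ENNReal.ofReal t < 2 * g z} * ENNReal.ofReal (t^(p-1-1))
      = ∫⁻ z, (2 * g z) ^ (p-1) ∂νg := L2.symm
  rw [L2'] at key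
  have hfin : ∫⁻ z, (2 * g z) ^ (p-1) ∂νg = (2:ℝ≥0∞)^(p-1) * ∫⁻ z, g z ^ p ∂ν := by
    rw [hνg, lintegral_withDensity_eq_lintegral_mul ν hg (h2g.pow measurable_const)]
    have hpw : ∀ z, (g * fun z => (2 * g z)^(p-1)) z = (2:ℝ≥0∞)^(p-1) * g z ^ p := by
      intro z
      simp only [Pi.mul_apply]
      rw [ENNReal.mul_rpow_of_nonneg _ _ (by linarith : (0:ℝ) ≤ p - 1)]
      calc g z * ((2:ℝ≥0∞)^(p-1) * g z ^ (p-1)) = (2:ℝ≥0∞)^(p-1) * (g z ^ (p-1) * g z) := by ring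
      _ = _ := by rw [ennreal_rpow_sub_one_mul _ hp]
    rw [lintegral_congr hpw, lintegral_const_mul _ (hg.pow measurable_const)]
  calc ENNReal.ofReal p * ∫⁻ t in Ioi (0:ℝ),
        ν {z | ENNReal.ofReal t < mD ν g z} * ENNReal.ofReal (t^(p-1))
      ≤ ENNReal.ofReal p * (ENNReal.ofReal (2/(p-1)) * ((2:ℝ≥0∞)^(p-1) * ∫⁻ z, g z ^ p ∂ν)) := by
        rw [← hfin]
        exact mul_le_mul_right key _
  _ = _ := by ring

end Doob

section Compare

/-- comparison of `L^r` norms from comparison of distribution functions -/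
lemma lintegral_rpow_compare (ρ κ : Measure ℂ) {h : ℂ → ℝ≥0∞} (hh : Measurable h) {r : ℝ}
    (hr : 0 < r)
    (hc : ∀ t : ℝ, 0 < t → ρ {z | ENNReal.ofReal t < h z} ≤ κ {z | ENNReal.ofReal t < h z}) :
    ∫⁻ z, h z ^ r ∂ρ ≤ ∫⁻ z, h z ^ r ∂κ := by
  rw [layercake_ennreal ρ hh hr, layercake_ennreal κ hh hr]
  apply mul_le_mul_right
  apply lintegral_mono_ae
  filter_upwards [ae_restrict_mem measurableSet_Ioi] with t ht
  rw [Set.mem_Ioi] at ht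
  exact mul_le_mul_left (hc t ht) _

/-- the dyadic analogue of `Kmu` -/
def Kd (ν μ : Measure ℂ) (z : ℂ) : ℝ≥0∞ :=
  ⨆ (j : ℤ) (m : ℤ) (_ : z ∈ dBox j m), μ (dBox j m) / ν (dBox j m)

lemma Kd_measurable (ν μ : Measure ℂ) : Measurable (Kd ν μ) := iSup_dbox_measurable _

lemma Kd_zero_of_not_UHP {ν μ : Measure ℂ} {z : ℂ} (hz : z ∉ UHP) : Kd ν μ z = 0 := by
  rw [Kd]
  simp only [ENNReal.iSup_eq_zero]
  intro j m hmem
  exact absurd (dBox_subset_UHP j m hmem) hz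

lemma mu_le_setLintegral_Kd {ν μ : Measure ℂ} {j m : ℤ} (h0 : ν (dBox j m) ≠ 0)
    (htop : ν (dBox j m) ≠ ∞) :
    μ (dBox j m) ≤ ∫⁻ z in dBox j m, Kd ν μ z ∂ν := by
  calc μ (dBox j m) = μ (dBox j m) / ν (dBox j m) * ν (dBox j m) :=
        (ENNReal.div_mul_cancel h0 htop).symm
  _ = ∫⁻ _ in dBox j m, μ (dBox j m) / ν (dBox j m) ∂ν := by rw [setLIntegral_const]
  _ ≤ ∫⁻ z in dBox j m, Kd ν μ z ∂ν :=
      setLIntegral_mono' (measurableSet_dBox j m)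
        (fun z hz => le_iSup_of_le j (le_iSup_of_le m (le_iSup_of_le hz le_rfl)))

/-- Carleson-type comparison for the maximal function -/
lemma main_compare (ν μ : Measure ℂ) {g : ℂ → ℝ≥0∞} {r : ℝ} (hr : 0 < r) :
    ∫⁻ z, mD ν g z ^ r ∂μ ≤ ∫⁻ z, mD ν g z ^ r ∂(ν.withDensity (Kd ν μ)) := by
  apply lintegral_rpow_compare μ (ν.withDensity (Kd ν μ)) (mD_measurable ν g) hr
  intro t _
  apply dist_compare
  intro j m hlt
  obtain ⟨h0, htop⟩ := finpos_of_lt_avg hlt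
  rw [withDensity_apply _ (measurableSet_dBox j m)]
  exact mu_le_setLintegral_Kd h0 htop

end Compare


/-- Lemma: for `1 ≤ q < p < ∞`, `ω ∈ B_p`, and `μ` a positive Borel measure on `𝓗` such
that `K_μ ∈ L^s_ω(𝓗)` with `s = p/(p-q)`, the dyadic maximal Carleson embedding
`(∫_𝓗 (M_{d,ω} f)^q dμ)^{1/q} ≤ C ‖f‖_{p,ω}` holds. -/
theorem dyadic_maximal_carleson_embedding_loss (p q : ℝ) (hq : 1 ≤ q) (hqp : q < p)
    (ω : ℂ → ℝ≥0∞) (hω : Measurable ω) (hBp : BBconst ω p < ⊤)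
    (μ : Measure ℂ)
    (hK : (∫⁻ z in UHP, Kmu ω μ z ^ (p / (p - q)) * ω z) < ⊤) :
    ∃ C : ℝ≥0∞, 0 < C ∧ C < ⊤ ∧ ∀ f : ℂ → ℂ, Measurable f →
      (∫⁻ z in UHP, maxDW ω f z ^ q ∂μ) ^ (1 / q) ≤
        C * (∫⁻ z in UHP, (‖f z‖₊ : ℝ≥0∞) ^ p * ω z) ^ (1 / p) := by

  classical
  have hq0 : (0:ℝ) < q := lt_of_lt_of_le one_pos hq
  have hp1 : (1:ℝ) < p := lt_of_le_of_lt hq hqp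
  have hp0 : (0:ℝ) < p := by linarith
  have hpq0 : (0:ℝ) < p - q := by linarith
  set s : ℝ := p / (p - q) with hs
  have hs0 : (0:ℝ) < s := div_pos hp0 hpq0
  set ν : Measure ℂ := volume.withDensity ω with hν
  set KK : ℂ → ℝ≥0∞ := Kd ν μ with hKK
  have hKKmeas : Measurable KK := Kd_measurable ν μ
  have measurableSet_UHP : MeasurableSet UHP := measurableSet_Ioi.preimage Complex.measurable_im
  set CD : ℝ≥0∞ := ENNReal.ofReal p * ENNReal.ofReal (2 / (p - 1)) * (2:ℝ≥0∞) ^ (p - 1) with hCD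
  set Ks : ℝ≥0∞ := ∫⁻ z in UHP, Kmu ω μ z ^ s * ω z with hKs
  have hKsfin : Ks ≠ ⊤ := hK.ne
  set C0 : ℝ≥0∞ := (CD ^ (q/p) * Ks ^ (1/s)) ^ (1/q) with hC0
  refine ⟨C0 + 1, ?_, ?_, ?_⟩
  · exact lt_of_lt_of_le zero_lt_one le_add_self
  · have hCDfin : CD ≠ ⊤ := by
      apply ENNReal.mul_ne_top (ENNReal.mul_ne_top ENNReal.ofReal_ne_top ENNReal.ofReal_ne_top)
      exact (ENNReal.rpow_lt_top_of_nonneg (by linarith) (by norm_num)).ne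
    have h1 : CD ^ (q/p) ≠ ⊤ :=
      (ENNReal.rpow_lt_top_of_nonneg (div_nonneg hq0.le hp0.le) hCDfin).ne
    have h2 : Ks ^ (1/s) ≠ ⊤ :=
      (ENNReal.rpow_lt_top_of_nonneg (one_div_nonneg.mpr hs0.le) hKsfin).ne
    have hC0fin : C0 ≠ ⊤ :=
      (ENNReal.rpow_lt_top_of_nonneg (one_div_nonneg.mpr hq0.le) (ENNReal.mul_ne_top h1 h2)).ne
    exact ENNReal.add_lt_top.mpr ⟨hC0fin.lt_top, ENNReal.one_lt_top⟩
  · intro f hf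
    set g : ℂ → ℝ≥0∞ := UHP.indicator (fun z => (‖f z‖₊ : ℝ≥0∞)) with hg
    have hgmeas : Measurable g := hf.nnnorm.coe_nnreal_ennreal.indicator measurableSet_UHP
    have hmaxeq : ∀ z, maxDW ω f z = mD ν g z := by
      intro z
      rw [maxDW, mD]
      apply iSup_congr; intro j
      apply iSup_congr; intro m
      apply iSup_congr; intro hmem
      rw [avg]
      congr 1
      · congr 1
        rw [hν, withDensity_apply _ (measurableSet_dBox j m)]
        rfl
      · rw [hν, restrict_withDensity (measurableSet_dBox j m),
          lintegral_withDensity_eq_lintegral_mul _ hω hgmeas]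
        apply setLIntegral_congr_fun (measurableSet_dBox j m)
        intro w hw
        simp only [Pi.mul_apply]
        rw [hg, Set.indicator_of_mem (dBox_subset_UHP j m hw), mul_comm]
    set X : ℝ≥0∞ := ∫⁻ z in UHP, (‖f z‖₊ : ℝ≥0∞) ^ p * ω z with hX
    have hgX : ∫⁻ z, g z ^ p ∂ν = X := by
      rw [hν, lintegral_withDensity_eq_lintegral_mul _ hω (hgmeas.pow measurable_const),
        hX, ← lintegral_indicator measurableSet_UHP]
      apply lintegral_congr
      intro z
      by_cases hz : z ∈ UHP
      · rw [Set.indicator_of_mem hz]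
        simp only [Pi.mul_apply]
        rw [hg, Set.indicator_of_mem hz, mul_comm]
      · rw [Set.indicator_of_notMem hz]
        simp only [Pi.mul_apply]
        rw [hg, Set.indicator_of_notMem hz, ENNReal.zero_rpow_of_pos hp0, mul_zero]
    have hKd : ∫⁻ z, KK z ^ s ∂ν ≤ Ks := by
      rw [hν, lintegral_withDensity_eq_lintegral_mul _ hω (hKKmeas.pow measurable_const)]
      have heq : ∫⁻ z, (ω * fun z => KK z ^ s) z = ∫⁻ z in UHP, ω z * KK z ^ s := by
        rw [← lintegral_indicator measurableSet_UHP]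
        apply lintegral_congr
        intro z
        by_cases hz : z ∈ UHP
        · rw [Set.indicator_of_mem hz]; rfl
        · rw [Set.indicator_of_notMem hz]
          simp only [Pi.mul_apply]
          rw [hKK, Kd_zero_of_not_UHP hz, ENNReal.zero_rpow_of_pos hs0, mul_zero]
      rw [heq, hKs]
      apply setLIntegral_mono' measurableSet_UHP
      intro z _
      rw [mul_comm (Kmu ω μ z ^ s) (ω z)]
      apply mul_le_mul_right
      apply ENNReal.rpow_le_rpow _ hs0.le
      rw [hKK, Kd]
      apply iSup_le; intro j
      apply iSup_le; intro m
      apply iSup_le; intro hmem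
      rw [Kmu]
      have hab : (2:ℝ)^j * (m:ℝ) < 2^j * ((m:ℝ)+1) := by
        have := two_zpow_pos j; nlinarith
      refine le_iSup_of_le ((2:ℝ)^j * (m:ℝ))
        (le_iSup_of_le ((2:ℝ)^j * ((m:ℝ)+1)) (le_iSup_of_le hab (le_iSup_of_le hmem ?_)))
      apply le_of_eq
      congr 1
      rw [hν, withDensity_apply _ (measurableSet_dBox j m)]
      rfl
    have hpq : Real.HolderConjugate (p/q) s := by
      refine Real.holderConjugate_iff.mpr ⟨?_, ?_⟩
      · exact (one_lt_div hq0).mpr hqp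
      · rw [hs, inv_div, inv_div, ← add_div, div_eq_one_iff_eq hp0.ne']
        ring
    have holder := ENNReal.lintegral_mul_le_Lp_mul_Lq ν hpq
      (((mD_measurable ν g).pow measurable_const).aemeasurable
        (f := fun z => mD ν g z ^ q)) hKKmeas.aemeasurable
    have hqp_exp : q * (p/q) = p := by
      rw [mul_comm]; exact div_mul_cancel₀ _ hq0.ne'
    have main : (∫⁻ z in UHP, maxDW ω f z ^ q ∂μ) ≤ (CD^(q/p) * Ks^(1/s)) * X^(q/p) := by
      calc ∫⁻ z in UHP, maxDW ω f z ^ q ∂μ = ∫⁻ z in UHP, mD ν g z ^ q ∂μ := by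
            apply lintegral_congr; intro z; rw [hmaxeq z]
      _ ≤ ∫⁻ z, mD ν g z ^ q ∂μ := setLIntegral_le_lintegral _ _
      _ ≤ ∫⁻ z, mD ν g z ^ q ∂(ν.withDensity KK) := main_compare ν μ hq0
      _ = ∫⁻ z, ((fun z => mD ν g z ^ q) * KK) z ∂ν := by
            rw [lintegral_withDensity_eq_lintegral_mul _ hKKmeas
              ((mD_measurable ν g).pow measurable_const)]
            apply lintegral_congr; intro z
            simp only [Pi.mul_apply]; rw [mul_comm]
      _ ≤ (∫⁻ z, (mD ν g z ^ q) ^ (p/q) ∂ν) ^ (1/(p/q)) * (∫⁻ z, KK z ^ s ∂ν) ^ (1/s) :=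
            holder
      _ ≤ (CD * X)^(q/p) * Ks^(1/s) := by
            apply mul_le_mul'
            · have e1 : ∀ z:ℂ, (mD ν g z ^ q) ^ (p/q) = mD ν g z ^ p := by
                intro z; rw [← ENNReal.rpow_mul, hqp_exp]
              have e2 : (1:ℝ)/(p/q) = q/p := one_div_div _ _
              rw [lintegral_congr e1, e2]
              apply ENNReal.rpow_le_rpow _ (div_nonneg hq0.le hp0.le)
              calc ∫⁻ z, mD ν g z ^ p ∂ν ≤ CD * ∫⁻ z, g z ^ p ∂ν := doob ν hgmeas hp1
              _ = CD * X := by rw [hgX]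
            · exact ENNReal.rpow_le_rpow hKd (one_div_nonneg.mpr hs0.le)
      _ = (CD^(q/p) * Ks^(1/s)) * X^(q/p) := by
            rw [ENNReal.mul_rpow_of_nonneg _ _ (div_nonneg hq0.le hp0.le)]
            ring
    calc (∫⁻ z in UHP, maxDW ω f z ^ q ∂μ) ^ (1/q)
        ≤ ((CD^(q/p) * Ks^(1/s)) * X^(q/p)) ^ (1/q) :=
          ENNReal.rpow_le_rpow main (one_div_nonneg.mpr hq0.le)
    _ = C0 * X^(1/p) := by
          rw [ENNReal.mul_rpow_of_nonneg _ _ (one_div_nonneg.mpr hq0.le), hC0,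
            ← ENNReal.rpow_mul]
          congr 2
          field_simp
    _ ≤ (C0 + 1) * X^(1/p) := mul_le_mul_left le_self_add _
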